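/- arXiv:math/0604183 — 2 statements merged into one kernel-verified Lean document; each statement's English description precedes it below -/
import Mathlib

section
/- Let k be a field, L a one-dimensional k-vector space, V a finite-dimensional k-vector space, and let I ⊆ H ⊆ V be subspaces with dim I = 1 and dim H = dim V − 1. Suppose given a nondegenerate alternating bilinear map c : (H/I) × (H/I) → L and a linear isomorphism f : V/I → Hom(H, L) such that the composition H/I ⊆ V/I → Hom(H, L) equals the composition of the adjoint c# : H/I → Hom(H/I, L) with the pullback map Hom(H/I, L) → Hom(H, L) along the quotient H → H/I (so that f is an isomorphism of the short exact sequence 0 → H/I → V/I → V/H → 0 onto 0 → Hom(H/I, L) → Hom(H, L) → Hom(I, L) → 0). Then there exists a unique alternating bilinear map b : V × V → L such that (a) b(h, h′) = c([h], [h′]) for all h, h′ ∈ H, and (b) for every v ∈ V, the linear functional b(−, v)|_H ∈ Hom(H, L) equals f([v]), where [v] denotes the class of v in V/I. Moreover this b is nondegenerate and satisfies I^⊥ = H. -/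
/-- Converse direction of Lemma 3.1 (lin_alg): given subspaces `I ⊆ H ⊆ V`
with `dim I = 1` and `dim H = dim V - 1`, a nondegenerate alternating form
`c` on `H / I` valued in the one-dimensional space `L`, and an isomorphism
`f : V / I → Hom(H, L)` restricting on `H / I` to the adjoint of `c`
(composed with the pullback `Hom(H/I, L) → Hom(H, L)`), there is a unique
alternating bilinear form `b : V × V → L` restricting to `c` on `H` and whose
partial adjoint `v ↦ b(-, v)|_H` is given by `f`; moreover `b` is
nondegenerate and `I^⊥ = H`. -/
theorem symplectic_extension_unique
    (k : Type*) [Field k]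
    (L : Type*) [AddCommGroup L] [Module k L] (hL : Module.finrank k L = 1)
    (V : Type*) [AddCommGroup V] [Module k V] [FiniteDimensional k V]
    (I H : Submodule k V) (hIH : I ≤ H)
    (hI : Module.finrank k I = 1)
    (hH : Module.finrank k H + 1 = Module.finrank k V)
    (c : (H ⧸ I.comap H.subtype) →ₗ[k] (H ⧸ I.comap H.subtype) →ₗ[k] L)
    (hc_alt : ∀ z, c z z = 0)
    (hc_nd : Function.Bijective c.flip)
    (f : (V ⧸ I) →ₗ[k] (H →ₗ[k] L)) (hf : Function.Bijective f)
    (hcompat : ∀ h h' : H,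
      f (Submodule.Quotient.mk (h : V)) h'
        = c (Submodule.Quotient.mk h') (Submodule.Quotient.mk h)) :
    ∃ b : V →ₗ[k] V →ₗ[k] L,
      ((∀ v : V, b v v = 0) ∧
       (∀ h h' : H, b (h : V) (h' : V)
          = c (Submodule.Quotient.mk h) (Submodule.Quotient.mk h')) ∧
       (∀ (v : V) (h : H), b (h : V) v = f (Submodule.Quotient.mk v) h)) ∧
      Function.Bijective b.flip ∧
      (∀ w : V, w ∈ H ↔ ∀ v ∈ I, b w v = 0) ∧
      (∀ b' : V →ₗ[k] V →ₗ[k] L,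
        ((∀ v : V, b' v v = 0) ∧
         (∀ h h' : H, b' (h : V) (h' : V)
            = c (Submodule.Quotient.mk h) (Submodule.Quotient.mk h')) ∧
         (∀ (v : V) (h : H), b' (h : V) v = f (Submodule.Quotient.mk v) h)) →
        b' = b) := by
  classical
  -- instances on L
  haveI : FiniteDimensional k L := Module.finite_of_finrank_eq_succ hL
  haveI : Nontrivial L := Module.nontrivial_of_finrank_pos (by rw [hL]; norm_num)
  -- choose a complement W of H
  obtain ⟨W, hW⟩ := Submodule.exists_isCompl H
  have hWrank : Module.finrank k W = 1 := by
    have := Submodule.finrank_add_eq_of_isCompl hW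
    omega
  set π : V →ₗ[k] H := Submodule.projectionOnto H W hW with hπdef
  have hπH : ∀ h : H, π (h : V) = h := fun h =>
    Submodule.projectionOnto_apply_left hW h
  have hsubW : ∀ v : V, v - (π v : V) ∈ W := by
    intro v
    rw [← Submodule.projectionOnto_apply_eq_zero_iff hW (q := W)]
    simp [π, hπH, -Submodule.coe_projectionOnto_apply]
  -- the bilinear form
  set q : V →ₗ[k] V ⧸ I := I.mkQ with hqdef
  set b : V →ₗ[k] V →ₗ[k] L := LinearMap.mk₂ k
      (fun v v' => f (q v') (π v) - f (q (v - (π v : V))) (π v'))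
      (by intro x y z; simp [map_add, add_sub_add_comm])
      (by intro a x y; simp [map_smul, smul_sub, smul_comm])
      (by intro x y z; simp [map_add]; abel)
      (by intro a x y; simp [map_smul, smul_sub])
    with hbdef
  have hb_apply : ∀ v v' : V, b v v' = f (q v') (π v) - f (q (v - (π v : V))) (π v') :=
    fun v v' => rfl
  -- generator of W
  obtain ⟨w₀, hw₀ne, hw₀gen⟩ := finrank_eq_one_iff'.mp hWrank
  have hπw₀ : π (w₀ : V) = 0 := Submodule.projectionOnto_apply_right hW w₀
  have hmemW : ∀ x : V, x ∈ W → ∃ a : k, a • (w₀ : V) = x := by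
    intro x hx
    obtain ⟨a, ha⟩ := hw₀gen ⟨x, hx⟩
    exact ⟨a, congrArg Subtype.val ha⟩
  -- q of elements of H
  have hqmk : ∀ x : V, q x = Submodule.Quotient.mk x := fun x => rfl
  -- restriction facts
  have hbH : ∀ (h : H) (v : V), b ((h : V)) v = f (q v) h := by
    intro h v
    rw [hb_apply]
    rw [hπH h]
    simp
  have hbHH : ∀ h h' : H, b (h : V) (h' : V)
      = c (Submodule.Quotient.mk h) (Submodule.Quotient.mk h') := by
    intro h h'
    rw [hbH, hqmk]
    exact hcompat h' h
  -- alternating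
  have halt : ∀ v : V, b v v = 0 := by
    intro v
    have h1 : f (q v) - f (q (v - (π v : V))) = f (q ((π v : V))) := by
      rw [← map_sub, ← map_sub, sub_sub_cancel]
    have h2 := congrArg (fun g : H →ₗ[k] L => g (π v)) h1
    simp only [LinearMap.sub_apply] at h2
    rw [hb_apply, h2, hqmk, hcompat]
    exact hc_alt _
  -- key vanishing lemma
  have key : ∀ vH : H, (vH : V) ∈ I → f (q (w₀ : V)) vH = 0 → vH = 0 := by
    intro vH hvI h0
    by_contra hne
    -- all functionals vanish at vH
    have hall : ∀ φ : H →ₗ[k] L, φ vH = 0 := by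
      intro φ
      obtain ⟨x, rfl⟩ := hf.2 φ
      obtain ⟨u, rfl⟩ := I.mkQ_surjective x
      have hu : (I.mkQ) u = q ((π u : V)) + q (u - (π u : V)) := by
        rw [← map_add]; congr 1; abel
      rw [hu, map_add, LinearMap.add_apply]
      have t1 : f (q ((π u : V))) vH = 0 := by
        rw [hqmk, hcompat]
        have : (Submodule.Quotient.mk vH : H ⧸ I.comap H.subtype) = 0 :=
          (Submodule.Quotient.mk_eq_zero _).mpr hvI
        rw [this, map_zero, LinearMap.zero_apply]
      have t2 : f (q (u - (π u : V))) vH = 0 := by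
        obtain ⟨a, ha⟩ := hmemW _ (hsubW u)
        rw [← ha, map_smul, map_smul, LinearMap.smul_apply, h0, smul_zero]
      rw [t1, t2, add_zero]
    -- contradiction: pick a dual functional separating vH
    obtain ⟨l, hl⟩ := exists_ne (0 : L)
    have hdual : ¬ ∀ g : Module.Dual k H, g vH = 0 := by
      rw [Module.forall_dual_apply_eq_zero_iff k vH]
      exact hne
    push_neg at hdual
    obtain ⟨g, hg⟩ := hdual
    have := hall (g.smulRight l)
    simp only [LinearMap.smulRight_apply] at this
    rcases smul_eq_zero.mp this with h | h
    · exact hg h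
    · exact hl h
  -- injectivity of flip
  have hker : ∀ v : V, (∀ w : V, b w v = 0) → v = 0 := by
    intro v hv
    have h1 : f (q v) = 0 := by
      apply LinearMap.ext
      intro h
      have := hv (h : V)
      rwa [hbH] at this
    have h2 : q v = 0 := hf.1 (by rw [h1, map_zero])
    have hvI : v ∈ I := (Submodule.Quotient.mk_eq_zero _).mp h2
    have hvH : v ∈ H := hIH hvI
    have hπv : π v = ⟨v, hvH⟩ := hπH ⟨v, hvH⟩
    have h3 : f (q (w₀ : V)) ⟨v, hvH⟩ = 0 := by
      have := hv (w₀ : V)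
      rw [hb_apply, hπw₀, hπv] at this
      simp only [Submodule.coe_zero, sub_zero, h2, map_zero, LinearMap.zero_apply,
        zero_sub, neg_eq_zero] at this
      exact this
    have := key ⟨v, hvH⟩ hvI h3
    exact congrArg Subtype.val this
  have hinj : Function.Injective b.flip := by
    rw [← LinearMap.ker_eq_bot, LinearMap.ker_eq_bot']
    intro v hv
    exact hker v fun w => by
      have : b.flip v w = 0 := by rw [hv]; rfl
      simpa using this
  have hbij : Function.Bijective b.flip := by
    refine ⟨hinj, ?_⟩
    have hdim : Module.finrank k V = Module.finrank k (V →ₗ[k] L) := by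
      rw [Module.finrank_linearMap, hL, mul_one]
    exact (LinearMap.injective_iff_surjective_of_finrank_eq_finrank hdim).mp hinj
  -- orthogonal complement
  haveI : Nontrivial I := Module.nontrivial_of_finrank_pos (by rw [hI]; norm_num)
  obtain ⟨i₀, hi₀⟩ := exists_ne (0 : I)
  have hi₀V : (i₀ : V) ≠ 0 := fun h => hi₀ (Subtype.ext h)
  have horth : ∀ w : V, w ∈ H ↔ ∀ v ∈ I, b w v = 0 := by
    intro w
    constructor
    · intro hw v hv
      have := hbHH ⟨w, hw⟩ ⟨v, hIH hv⟩
      rw [this]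
      have : (Submodule.Quotient.mk (⟨v, hIH hv⟩ : H) : H ⧸ I.comap H.subtype) = 0 :=
        (Submodule.Quotient.mk_eq_zero _).mpr hv
      rw [this, map_zero]
    · intro hv
      obtain ⟨a, ha⟩ := hmemW _ (hsubW w)
      have hiH : ((⟨(i₀ : V), hIH i₀.2⟩ : H) : V) ∈ I := i₀.2
      have hπi : π (i₀ : V) = ⟨(i₀ : V), hIH i₀.2⟩ := hπH ⟨(i₀ : V), hIH i₀.2⟩
      have hqi : q (i₀ : V) = 0 := (Submodule.Quotient.mk_eq_zero _).mpr i₀.2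
      have hb0 := hv (i₀ : V) i₀.2
      rw [hb_apply, hqi, map_zero, LinearMap.zero_apply, zero_sub, neg_eq_zero,
        ← ha, map_smul, map_smul, LinearMap.smul_apply, hπi] at hb0
      have hfne : f (q (w₀ : V)) (⟨(i₀ : V), hIH i₀.2⟩ : H) ≠ 0 := by
        intro h0
        have := key ⟨(i₀ : V), hIH i₀.2⟩ i₀.2 h0
        exact hi₀V (congrArg Subtype.val this)
      rcases smul_eq_zero.mp hb0 with h | h
      · have : w - (π w : V) = 0 := by rw [← ha, h, zero_smul]
        have : w = (π w : V) := by
          have h' := this; rwa [sub_eq_zero] at h'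
        rw [this]; exact (π w).2
      · exact absurd h hfne
  -- uniqueness (general formula)
  have gen : ∀ b' : V →ₗ[k] V →ₗ[k] L,
      ((∀ v : V, b' v v = 0) ∧
       (∀ h h' : H, b' (h : V) (h' : V)
          = c (Submodule.Quotient.mk h) (Submodule.Quotient.mk h')) ∧
       (∀ (v : V) (h : H), b' (h : V) v = f (Submodule.Quotient.mk v) h)) →
      b' = b := by
    rintro b' ⟨alt', _, adj'⟩
    have skew : ∀ x y : V, b' y x = - b' x y := by
      intro x y
      have h0 := alt' (x + y)
      simp only [map_add, LinearMap.add_apply, alt', zero_add, add_zero] at h0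
      rw [eq_neg_iff_add_eq_zero]
      exact h0
    ext v v'
    have hsplit : b' v v' = b' ((π v : V)) v' + b' (v - (π v : V)) v' := by
      have e : ((π v : V)) + (v - (π v : V)) = v := by abel
      rw [← LinearMap.add_apply, ← map_add, e]
    obtain ⟨a, ha⟩ := hmemW _ (hsubW v)
    obtain ⟨a', ha'⟩ := hmemW _ (hsubW v')
    have t1 : b' ((π v : V)) v' = f (q v') (π v) := adj' v' (π v)
    have t2 : b' (v - (π v : V)) v' = - (a • f (q (w₀ : V)) (π v')) := by
      rw [← ha, map_smul, LinearMap.smul_apply]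
      have e1 : b' (w₀ : V) v' = - b' v' (w₀ : V) := skew _ _
      have e2 : b' v' (w₀ : V) = b' ((π v' : V)) (w₀ : V) + b' (v' - (π v' : V)) (w₀ : V) := by
        have e : ((π v' : V)) + (v' - (π v' : V)) = v' := by abel
        rw [← LinearMap.add_apply, ← map_add, e]
      have e3 : b' ((π v' : V)) (w₀ : V) = f (q (w₀ : V)) (π v') := adj' (w₀ : V) (π v')
      have e4 : b' (v' - (π v' : V)) (w₀ : V) = 0 := by
        rw [← ha', map_smul, LinearMap.smul_apply, alt', smul_zero]
      rw [e1, e2, e3, e4, add_zero]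
      rw [smul_neg]
    rw [hsplit, t1, t2, hb_apply, ← ha, map_smul, map_smul, LinearMap.smul_apply]
    abel
  refine ⟨b, ⟨halt, hbHH, fun v h => by rw [hbH, hqmk]⟩, hbij, horth, gen⟩
end

section
/- Let k be a field, V a k-vector space, and H ⊆ V a subspace of codimension at most one (i.e. dim(V/H) ≤ 1). Consider the commutative square of canonical k-linear maps whose top arrow is H ⊗ H → Λ²H (x ⊗ y ↦ x ∧ y), whose left arrow is the inclusion-induced map H ⊗ H → V ⊗ H, whose right arrow is the map Λ²H → Λ²V induced by the inclusion H ⊆ V, and whose bottom arrow is V ⊗ H → Λ²V (v ⊗ y ↦ v ∧ y). Then this square is cocartesian (a pushout) in the category of k-vector spaces; equivalently, the induced map from the pushout (Λ²H ⊕ (V ⊗ H)) / { (x∧y, −x⊗y) : x, y ∈ H } to Λ²V is an isomorphism. -/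
open TensorProduct

/-- The subspace of `W ⊗ W` spanned by the pure squares `x ⊗ x`. -/
def squaresSubmodule (k W : Type*) [Field k] [AddCommGroup W] [Module k W] :
    Submodule k (W ⊗[k] W) :=
  Submodule.span k {z : W ⊗[k] W | ∃ x : W, z = x ⊗ₜ[k] x}

/-- The second exterior power `Λ²W`, realized as the quotient of `W ⊗ W` by the
subspace spanned by the squares `x ⊗ x`. -/
abbrev ExtSq (k W : Type*) [Field k] [AddCommGroup W] [Module k W] :=
  (W ⊗[k] W) ⧸ squaresSubmodule k W

/-- The canonical map `W ⊗ W → Λ²W`, `x ⊗ y ↦ x ∧ y`. -/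
def wedgeMk (k W : Type*) [Field k] [AddCommGroup W] [Module k W] :
    W ⊗[k] W →ₗ[k] ExtSq k W :=
  (squaresSubmodule k W).mkQ

/-- The map `Λ²H → Λ²V` induced by the inclusion of a subspace `H ⊆ V`. -/
noncomputable def extSqMapOfLE (k V : Type*) [Field k] [AddCommGroup V] [Module k V]
    (H : Submodule k V) : ExtSq k H →ₗ[k] ExtSq k V :=
  Submodule.mapQ (squaresSubmodule k H) (squaresSubmodule k V)
    (TensorProduct.map H.subtype H.subtype)
    (by
      rw [squaresSubmodule, Submodule.span_le]
      rintro z ⟨x, rfl⟩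
      simp only [SetLike.mem_coe, Submodule.mem_comap, TensorProduct.map_tmul]
      exact Submodule.subset_span ⟨H.subtype x, rfl⟩)

/-- For a subspace `H ⊆ V` of codimension at most one, the commutative square
with top arrow `H ⊗ H → Λ²H`, left arrow `H ⊗ H → V ⊗ H`, right arrow
`Λ²H → Λ²V` and bottom arrow `V ⊗ H → Λ²V` (where `V ⊗ H → Λ²V` is
`v ⊗ y ↦ v ∧ y`) is cocartesian in the category of `k`-vector spaces,
expressed via the universal property of the pushout. -/
theorem extSq_square_is_pushout
    (k V : Type*) [Field k] [AddCommGroup V] [Module k V]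
    (H : Submodule k V) (hH : Module.rank k (V ⧸ H) ≤ 1)
    (W : Type*) [AddCommGroup W] [Module k W]
    (g₁ : ExtSq k H →ₗ[k] W) (g₂ : (V ⊗[k] H) →ₗ[k] W)
    (hcomm : g₁ ∘ₗ wedgeMk k H = g₂ ∘ₗ TensorProduct.map H.subtype LinearMap.id) :
    ∃! g : ExtSq k V →ₗ[k] W,
      g ∘ₗ extSqMapOfLE k V H = g₁ ∧
      g ∘ₗ (wedgeMk k V ∘ₗ TensorProduct.map LinearMap.id H.subtype) = g₂ := by
  classical
  obtain ⟨C, hC⟩ := Submodule.exists_isCompl H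
  set π : V →ₗ[k] H := Submodule.linearProjOfIsCompl H C hC with hπdef
  have hπH : ∀ y : H, π (H.subtype y) = y := fun y =>
    Submodule.linearProjOfIsCompl_apply_left hC y
  have hc : ∀ (x y : H), g₂ (H.subtype x ⊗ₜ[k] y) = g₁ (wedgeMk k H (x ⊗ₜ[k] y)) := by
    intro x y
    have := LinearMap.congr_fun hcomm (x ⊗ₜ[k] y)
    simpa using this.symm
  have hsq : ∀ x : H, wedgeMk k H (x ⊗ₜ[k] x) = 0 := fun x =>
    (Submodule.Quotient.mk_eq_zero _).mpr (Submodule.subset_span ⟨x, rfl⟩)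
  have hsqV : ∀ v : V, (squaresSubmodule k V).mkQ (v ⊗ₜ[k] v) = 0 := fun v =>
    (Submodule.Quotient.mk_eq_zero _).mpr (Submodule.subset_span ⟨v, rfl⟩)
  -- antisymmetry in Λ²V
  have hanti : ∀ a b : V, (squaresSubmodule k V).mkQ (a ⊗ₜ[k] b)
      = - (squaresSubmodule k V).mkQ (b ⊗ₜ[k] a) := by
    intro a b
    have h1 : (a + b) ⊗ₜ[k] (a + b) - a ⊗ₜ[k] a - b ⊗ₜ[k] b
        = a ⊗ₜ[k] b + b ⊗ₜ[k] a := by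
      simp [tmul_add, add_tmul]; abel
    have h2 : (squaresSubmodule k V).mkQ (a ⊗ₜ[k] b + b ⊗ₜ[k] a) = 0 := by
      rw [← h1]
      simp [map_sub, hsqV]
    rw [map_add] at h2
    exact eq_neg_of_add_eq_zero_left h2
  -- the lifting map on V ⊗ V
  set ghat : V ⊗[k] V →ₗ[k] W :=
    (g₂ ∘ₗ TensorProduct.map LinearMap.id π)
      - (g₂ ∘ₗ TensorProduct.map (LinearMap.id - H.subtype ∘ₗ π) π
          ∘ₗ (TensorProduct.comm k V V).toLinearMap) with hghatdef
  have hβ : ∀ v w : V, ghat (v ⊗ₜ[k] w)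
      = g₂ (v ⊗ₜ[k] π w) - g₂ ((w - H.subtype (π w)) ⊗ₜ[k] π v) := by
    intro v w
    simp [hghatdef, TensorProduct.map_tmul, LinearMap.sub_apply]
  have hβsq : ∀ v : V, ghat (v ⊗ₜ[k] v) = 0 := by
    intro v
    rw [hβ, sub_tmul, map_sub]
    have : g₂ (H.subtype (π v) ⊗ₜ[k] π v) = 0 := by
      rw [hc, hsq, map_zero]
    rw [this]
    abel
  have hker : squaresSubmodule k V ≤ LinearMap.ker ghat := by
    rw [squaresSubmodule, Submodule.span_le]
    rintro z ⟨x, rfl⟩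
    simpa using hβsq x
  set g : ExtSq k V →ₗ[k] W := Submodule.liftQ (squaresSubmodule k V) ghat hker with hgdef
  have hgmk : ∀ z : V ⊗[k] V, g ((squaresSubmodule k V).mkQ z) = ghat z := fun z =>
    Submodule.liftQ_apply _ _ _
  -- first condition
  have cond1 : g ∘ₗ extSqMapOfLE k V H = g₁ := by
    apply Submodule.linearMap_qext
    apply TensorProduct.ext'
    intro x y
    have hmap : (extSqMapOfLE k V H) ((squaresSubmodule k H).mkQ (x ⊗ₜ[k] y))
        = (squaresSubmodule k V).mkQ (H.subtype x ⊗ₜ[k] H.subtype y) := by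
      simp [extSqMapOfLE, Submodule.mapQ_apply]
    simp only [LinearMap.comp_apply, Submodule.mkQ_apply] at hmap ⊢
    rw [hmap]
    have h5 := hgmk (H.subtype x ⊗ₜ[k] H.subtype y)
    simp only [Submodule.mkQ_apply] at h5
    rw [h5, hβ, hπH, hπH]
    rw [sub_self, TensorProduct.zero_tmul, map_zero, sub_zero]
    exact hc x y
  -- second condition
  have cond2 : g ∘ₗ (wedgeMk k V ∘ₗ TensorProduct.map LinearMap.id H.subtype) = g₂ := by
    apply TensorProduct.ext'
    intro v y
    simp only [LinearMap.comp_apply, TensorProduct.map_tmul, LinearMap.id_coe, id_eq]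
    have h5 := hgmk (v ⊗ₜ[k] H.subtype y)
    simp only [wedgeMk]
    rw [h5, hβ, hπH]
    rw [sub_self, TensorProduct.zero_tmul, map_zero, sub_zero]
  -- surjectivity of the bottom composite
  have hrange : ∀ v w : V, (squaresSubmodule k V).mkQ (v ⊗ₜ[k] w)
      ∈ LinearMap.range (wedgeMk k V ∘ₗ TensorProduct.map LinearMap.id H.subtype) := by
    intro v w
    by_cases hw : w ∈ H
    · exact ⟨v ⊗ₜ[k] ⟨w, hw⟩, by simp [wedgeMk]⟩
    · obtain ⟨v₀, hv₀⟩ := rank_le_one_iff.mp hH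
      obtain ⟨r, hr⟩ := hv₀ (Submodule.Quotient.mk w)
      obtain ⟨s, hs⟩ := hv₀ (Submodule.Quotient.mk v)
      have hr0 : r ≠ 0 := by
        rintro rfl
        rw [zero_smul] at hr
        exact hw ((Submodule.Quotient.mk_eq_zero H).mp hr.symm)
      set c : k := s / r with hcdef
      have hmem : v - c • w ∈ H := by
        rw [← Submodule.Quotient.mk_eq_zero H]
        rw [Submodule.Quotient.mk_sub, Submodule.Quotient.mk_smul, ← hr, ← hs]
        rw [smul_smul, hcdef, div_mul_cancel₀ _ hr0, sub_self]
      have hvw : v ⊗ₜ[k] w = (v - c • w) ⊗ₜ[k] w + c • (w ⊗ₜ[k] w) := by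
        rw [sub_tmul, smul_tmul']
        abel
      rw [hvw, map_add, map_smul, hsqV, smul_zero, add_zero, hanti]
      refine ⟨-(w ⊗ₜ[k] ⟨v - c • w, hmem⟩), ?_⟩
      simp [wedgeMk]
  refine ⟨g, ⟨cond1, cond2⟩, ?_⟩
  rintro g' ⟨hg'1, hg'2⟩
  apply LinearMap.ext
  intro z
  obtain ⟨u, rfl⟩ := (squaresSubmodule k V).mkQ_surjective z
  have hspan : u ∈ Submodule.span k {t : V ⊗[k] V | ∃ v w : V, v ⊗ₜ[k] w = t} := by
    rw [TensorProduct.span_tmul_eq_top]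
    trivial
  induction hspan using Submodule.span_induction with
  | mem t ht =>
    obtain ⟨v, w, rfl⟩ := ht
    obtain ⟨x, hx⟩ := hrange v w
    rw [show (squaresSubmodule k V).mkQ (v ⊗ₜ[k] w)
        = (wedgeMk k V ∘ₗ TensorProduct.map LinearMap.id H.subtype) x from hx.symm]
    rw [← LinearMap.comp_apply, ← LinearMap.comp_apply, hg'2, cond2]
  | zero => simp
  | add a b _ _ ha hb => rw [map_add, map_add, map_add, ha, hb]
  | smul c a _ ha => rw [map_smul, map_smul, map_smul, ha]
end
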